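/- Let X be a normed space, C ⊆ X a closed subspace, and suppose there is a bounded linear map J : ℓ^∞ → X and a constant c > 0 such that dist(Ju, C) ≥ c·dist(u, c₀) for all u ∈ ℓ^∞, and J(c₀) ⊆ C. Then the quotient X/C is not separable. -/

import Mathlib

open Filter

noncomputable section QuotSepAux

/-- A fixed bijection `ℕ ≃ ℕ × ℤ`. -/
def qsEquiv : ℕ ≃ ℕ × ℤ := (Denumerable.eqv (ℕ × ℤ)).symm

/-- Indicator function of the set `{m | (qsEquiv m).2 = ⌊r * 2 ^ (qsEquiv m).1⌋}`. -/
def qsInd (r : ℝ) : ℕ → ℝ :=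
  fun m => if (qsEquiv m).2 = ⌊r * 2 ^ (qsEquiv m).1⌋ then 1 else 0

lemma qsInd_memℓp (r : ℝ) : Memℓp (qsInd r) ⊤ := by
  apply memℓp_infty
  refine ⟨1, ?_⟩
  rintro x ⟨m, rfl⟩
  simp only [qsInd]
  split <;> simp

/-- The indicator as an element of `ℓ^∞`. -/
def qsLp (r : ℝ) : lp (fun _ : ℕ => ℝ) ⊤ := ⟨qsInd r, qsInd_memℓp r⟩

lemma qsLp_apply (r : ℝ) (m : ℕ) : (qsLp r) m = qsInd r m := rfl

lemma qs_floor_ne (r s : ℝ) (hrs : r ≠ s) :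
    ∃ N : ℕ, ∀ n ≥ N, ⌊r * 2 ^ n⌋ ≠ ⌊s * 2 ^ n⌋ := by
  have habs : 0 < |r - s| := abs_pos.2 (sub_ne_zero.2 hrs)
  obtain ⟨N, hN⟩ := pow_unbounded_of_one_lt (|r - s|⁻¹) (one_lt_two (α := ℝ))
  refine ⟨N, fun n hn h => ?_⟩
  have h1 : |r * 2 ^ n - s * 2 ^ n| < 1 :=
    Int.abs_sub_lt_one_of_floor_eq_floor h
  rw [← sub_mul, abs_mul, abs_of_pos (by positivity : (0:ℝ) < 2 ^ n)] at h1
  have h2 : |r - s|⁻¹ < 2 ^ n :=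
    lt_of_lt_of_le hN (by exact pow_le_pow_right₀ one_le_two hn)
  have h3 : (1 : ℝ) < |r - s| * 2 ^ n := by
    rw [← inv_lt_iff_one_lt_mul₀' habs]
    exact h2
  linarith

lemma qs_one_le_norm (r s : ℝ) (hrs : r ≠ s) (w : lp (fun _ : ℕ => ℝ) ⊤)
    (hw : Tendsto (fun n => w n) atTop (nhds 0)) :
    1 ≤ ‖qsLp r - qsLp s - w‖ := by
  obtain ⟨N₀, hN₀⟩ := qs_floor_ne r s hrs
  apply le_of_forall_sub_le
  intro ε hε
  obtain ⟨N, hN⟩ := Metric.tendsto_atTop.mp hw ε hε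
  -- find m ≥ N of the form qsEquiv.symm (n, ⌊r * 2 ^ n⌋) with n ≥ N₀
  have hinj : Function.Injective
      (fun n : ℕ => qsEquiv.symm (n + N₀, ⌊r * 2 ^ (n + N₀)⌋)) := by
    intro a b hab
    have := qsEquiv.symm.injective hab
    have := congrArg Prod.fst this
    simpa using this
  obtain ⟨m, hm_mem, hm_gt⟩ :=
    (Set.infinite_range_of_injective hinj).exists_gt N
  obtain ⟨n, rfl⟩ := hm_mem
  set n' := n + N₀ with hn'
  set m := qsEquiv.symm (n', ⌊r * 2 ^ n'⌋) with hm
  have hem : qsEquiv m = (n', ⌊r * 2 ^ n'⌋) := qsEquiv.apply_symm_apply _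
  have hr1 : qsInd r m = 1 := by
    simp [qsInd, hem]
  have hs0 : qsInd s m = 0 := by
    simp only [qsInd, hem]
    rw [if_neg]
    exact hN₀ n' (Nat.le_add_left _ _)
  have hwm : |w m| < ε := by
    have := hN m (le_of_lt hm_gt)
    simpa [Real.dist_eq] using this
  have happly : (qsLp r - qsLp s - w) m = qsInd r m - qsInd s m - w m := by
    simp [lp.coeFn_sub, qsLp_apply]
  have hle : ‖(qsLp r - qsLp s - w) m‖ ≤ ‖qsLp r - qsLp s - w‖ :=
    lp.norm_apply_le_norm ENNReal.top_ne_zero _ m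
  rw [happly, hr1, hs0] at hle
  have : 1 - ε ≤ ‖(1 : ℝ) - 0 - w m‖ := by
    rw [sub_zero, Real.norm_eq_abs]
    have := abs_sub_abs_le_abs_sub (1 : ℝ) (w m)
    rw [abs_one] at this
    linarith
  linarith

end QuotSepAux

/-- If a closed subspace `C` of a normed space `X` receives `c₀` under a bounded map
`J : ℓ^∞ → X` which is bounded below at the level of quotients, then `X ⧸ C` is not
separable. -/
theorem quotient_not_separable_of_linfty_embedding
    (X : Type*) [NormedAddCommGroup X] [NormedSpace ℝ X]
    (C : Submodule ℝ X) (hC : IsClosed (C : Set X))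
    (J : lp (fun _ : ℕ => ℝ) ⊤ →L[ℝ] X)
    (hJc0 : ∀ u : lp (fun _ : ℕ => ℝ) ⊤,
      Tendsto (fun n => u n) atTop (nhds 0) → J u ∈ C)
    (c : ℝ) (hc : 0 < c)
    (hlow : ∀ u : lp (fun _ : ℕ => ℝ) ⊤,
      c * Metric.infDist u {w : lp (fun _ : ℕ => ℝ) ⊤ |
          Tendsto (fun n => w n) atTop (nhds 0)}
        ≤ Metric.infDist (J u) (C : Set X)) :
    ¬ TopologicalSpace.SeparableSpace (X ⧸ C) := by
  intro hsep
  set c0 : Set (lp (fun _ : ℕ => ℝ) ⊤) :=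
    {w : lp (fun _ : ℕ => ℝ) ⊤ | Tendsto (fun n => w n) atTop (nhds 0)} with hc0
  have hc0ne : c0.Nonempty := by
    refine ⟨0, ?_⟩
    simp only [hc0, Set.mem_setOf_eq]
    have : (fun n : ℕ => (0 : lp (fun _ : ℕ => ℝ) ⊤) n) = fun _ => (0:ℝ) := by
      funext n; simp [lp.coeFn_zero]
    rw [this]
    exact tendsto_const_nhds
  -- quotient points
  set p : ℝ → X ⧸ C := fun r => Submodule.Quotient.mk (J (qsLp r)) with hp
  -- separation
  have hsepd : ∀ r s : ℝ, r ≠ s → c ≤ dist (p r) (p s) := by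
    intro r s hrs
    have h1 : (1 : ℝ) ≤ Metric.infDist (qsLp r - qsLp s) c0 := by
      by_contra h
      push_neg at h
      obtain ⟨w, hw, hwd⟩ := (Metric.infDist_lt_iff hc0ne).mp h
      rw [dist_eq_norm] at hwd
      exact absurd hwd (not_lt.2 (qs_one_le_norm r s hrs w hw))
    have h2 : c ≤ Metric.infDist (J (qsLp r - qsLp s)) (C : Set X) := by
      calc c = c * 1 := (mul_one c).symm
        _ ≤ c * Metric.infDist (qsLp r - qsLp s) c0 := by
            exact mul_le_mul_of_nonneg_left h1 (le_of_lt hc)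
        _ ≤ Metric.infDist (J (qsLp r - qsLp s)) (C : Set X) := hlow _
    have hdist : dist (p r) (p s)
        = Metric.infDist (J (qsLp r - qsLp s)) (C : Set X) := by
      rw [dist_eq_norm, hp]
      have : (Submodule.Quotient.mk (J (qsLp r)) : X ⧸ C)
          - Submodule.Quotient.mk (J (qsLp s))
          = Submodule.Quotient.mk (J (qsLp r - qsLp s)) := by
        rw [map_sub, ← Submodule.Quotient.mk_sub]
      rw [this]
      exact QuotientAddGroup.norm_mk (S := C.toAddSubgroup) (J (qsLp r - qsLp s))
    rw [hdist]
    exact h2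
  -- disjoint balls
  have hdisj : Pairwise (Function.onFun Disjoint fun r : ℝ => Metric.ball (p r) (c / 2)) := by
    intro r s hrs
    exact Metric.ball_disjoint_ball (by linarith [hsepd r s hrs])
  have hcount : Countable ℝ :=
    hdisj.countable_of_isOpen_disjoint (fun _ => Metric.isOpen_ball)
      (fun r => Metric.nonempty_ball.2 (by linarith))
  exact Cardinal.not_countable_real (@Set.countable_univ ℝ hcount)
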